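/- arXiv:2604.00277 — 4 statements merged into one kernel-verified Lean document; each statement's English description precedes it below -/
import Mathlib

section
/- Let F : ℝ^N → ℝ be convex and continuously differentiable with gradient Ψ = ∇F, and let W be a symmetric N×N real matrix. Define the energy E(x) = -(1/2)·Ψ(x)ᵀ W Ψ(x) + xᵀ Ψ(x) - F(x). Then at every point x where Ψ is differentiable (with derivative DΨ(x)), the gradient of E satisfies ∇E(x) = -DΨ(x)·f(x), where f(x) = -x + W Ψ(x). -/
/-- `Euc N` is the Euclidean space `ℝ^N`. -/
abbrev Euc (N : ℕ) : Type := EuclideanSpace ℝ (Fin N)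

/-- for an EBM with convex `C¹` primitive `F`, gradient activation
`Ψ = ∇F`, symmetric `W`, energy `E(x) = -(1/2)⟪Ψ x, W Ψ x⟫ + ⟪x, Ψ x⟫ - F x` and
vector field `f(x) = -x + W Ψ x`, at any point where `Ψ` has derivative `D`, the
gradient of the energy is `∇E(x) = -D (f x)`. -/
theorem stmt_0 {N : ℕ}
    (F : Euc N → ℝ) (Ψ : Euc N → Euc N)
    (W : Euc N →L[ℝ] Euc N)
    (hconv : ConvexOn ℝ Set.univ F)
    (hΨgrad : ∀ x, HasGradientAt F (Ψ x) x)
    (hΨcont : Continuous Ψ)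
    (hWsymm : ∀ u v : Euc N, (inner ℝ (W u) v : ℝ) = inner ℝ u (W v))
    (Energy : Euc N → ℝ)
    (hE : ∀ x, Energy x =
      -(1/2) * (inner ℝ (Ψ x) (W (Ψ x)) : ℝ) + (inner ℝ x (Ψ x) : ℝ) - F x)
    (f : Euc N → Euc N)
    (hf : ∀ x, f x = -x + W (Ψ x))
    (x : Euc N) (D : Euc N →L[ℝ] Euc N)
    (hD : HasFDerivAt Ψ D x) :
    HasGradientAt Energy (-(D (f x))) x := by
  -- symmetry of the Hessian `D`
  have hF' : ∀ y, HasFDerivAt F ((innerSL ℝ) (Ψ y)) y := by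
    intro y
    have h := (hΨgrad y).hasFDerivAt
    have : (InnerProductSpace.toDual ℝ (Euc N)) (Ψ y) = (innerSL ℝ) (Ψ y) := by
      ext v; simp [InnerProductSpace.toDual_apply_apply]
    rwa [this] at h
  have hF'' : HasFDerivAt (fun y => (innerSL ℝ) (Ψ y)) ((innerSL ℝ (E := Euc N)).comp D) x :=
    (innerSL ℝ (E := Euc N)).hasFDerivAt.comp x hD
  have hDsymm : ∀ v w : Euc N, (inner ℝ (D v) w : ℝ) = inner ℝ (D w) v := by
    intro v w
    have := second_derivative_symmetric hF' hF'' v w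
    simpa using this
  -- derivatives of the three pieces
  have hWΨ : HasFDerivAt (fun y => W (Ψ y)) (W.comp D) x := W.hasFDerivAt.comp x hD
  have h1 := (hD.inner ℝ hWΨ).const_mul (-(1/2 : ℝ))
  have h2 := (hasFDerivAt_id x).inner ℝ hD
  have hEnergy : Energy = fun y =>
      -(1/2) * (inner ℝ (Ψ y) (W (Ψ y)) : ℝ) + (inner ℝ y (Ψ y) : ℝ) - F y := funext hE
  have hsum := (h1.add h2).sub (hF' x)
  simp only [id_eq] at hsum
  rw [show (((fun y => -(1 / 2) * inner ℝ (Ψ y) (W (Ψ y))) + fun t => inner ℝ t (Ψ t)) - F) = Energy from by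
    funext y; rw [hE]; rfl] at hsum
  have hgoal : HasGradientAt Energy (-(D (f x))) x ↔
      HasFDerivAt Energy (InnerProductSpace.toDual ℝ (Euc N) (-(D (f x)))) x :=
    hasGradientAt_iff_hasFDerivAt
  rw [hgoal]
  refine hsum.congr_fderiv ?_
  ext v
  simp only [InnerProductSpace.toDual_apply_apply, ContinuousLinearMap.coe_sub',
    ContinuousLinearMap.coe_add', Pi.sub_apply, Pi.add_apply,
    ContinuousLinearMap.coe_smul', Pi.smul_apply, ContinuousLinearMap.coe_comp',
    Function.comp_apply, fderivInnerCLM_apply, ContinuousLinearMap.prod_apply,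
    ContinuousLinearMap.coe_id', id_eq, innerSL_apply_apply, smul_eq_mul]
  have e1 : (inner ℝ (Ψ x) (W (D v)) : ℝ) = inner ℝ (D v) (W (Ψ x)) := by
    rw [← hWsymm, real_inner_comm]
  have e2 : (inner ℝ (D v) (f x) : ℝ) = inner ℝ (D (f x)) v := hDsymm v (f x)
  rw [inner_neg_left, ← e2, hf, inner_add_right, inner_neg_right, e1]
  rw [real_inner_comm v (Ψ x), real_inner_comm (D v) x]
  ring
end

section
/- Let F : ℝ^N → ℝ be convex C¹ with growth F(x) ~ Θ(‖x‖^q) for some 1 < q < 2, meaning a‖x‖^q ≤ F(x) ≤ b‖x‖^q for large ‖x‖ and moreover ‖∇F(x)‖ ≤ C‖x‖^{q-1} for large ‖x‖. Let W be symmetric with no constraint on its eigenvalues. Then the energy E(x) = -(1/2)Ψ(x)ᵀWΨ(x) + xᵀΨ(x) - F(x), with Ψ = ∇F, is radially unbounded: E(x) → +∞ as ‖x‖ → ∞. -/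
lemma grad_convex_ineq {N : ℕ} {F : Euc N → ℝ} {Ψ : Euc N → Euc N}
    (hconv : ConvexOn ℝ Set.univ F) (hΨ : ∀ x, HasGradientAt F (Ψ x) x)
    (x y : Euc N) : F x + (inner ℝ (Ψ x) (y - x) : ℝ) ≤ F y := by
  rcases eq_or_ne y x with rfl | hne
  · simp
  set L : ℝ →ᵃ[ℝ] Euc N := AffineMap.lineMap x y with hL
  have hgconv : ConvexOn ℝ Set.univ (F ∘ L) := by
    simpa using hconv.comp_affineMap L
  have hpath : HasDerivAt (fun t : ℝ => L t) (y - x) 0 := by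
    have : HasDerivAt (fun t : ℝ => t • (y - x) + x) ((1 : ℝ) • (y - x)) 0 :=
      ((hasDerivAt_id (0 : ℝ)).smul_const (y - x)).add_const x
    simp only [one_smul] at this
    have hfun : (fun t : ℝ => L t) = fun t : ℝ => t • (y - x) + x := by
      funext t; simp [hL, AffineMap.lineMap_apply]
    rw [hfun]
    exact this
  have hderiv : HasDerivAt (F ∘ L) (inner ℝ (Ψ x) (y - x) : ℝ) 0 := by
    have hF : HasFDerivAt F (InnerProductSpace.toDual ℝ (Euc N) (Ψ x)) (L 0) := by
      simpa [hL] using (hΨ x).hasFDerivAt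
    simpa using hF.comp_hasDerivAt 0 hpath
  have := hgconv.le_slope_of_hasDerivAt (Set.mem_univ 0) (Set.mem_univ 1)
    one_pos hderiv
  rw [slope_def_field] at this
  simp only [Function.comp_apply, hL, AffineMap.lineMap_apply_zero,
    AffineMap.lineMap_apply_one, sub_zero, div_one] at this
  linarith

/-- for a convex `C¹` primitive `F` with `Θ(‖x‖^q)` growth, `1 < q < 2`,
and gradient bound `‖∇F x‖ ≤ C ‖x‖^{q-1}` for large `‖x‖`, the EBM energy
`E(x) = -(1/2)⟪Ψ x, W Ψ x⟫ + ⟪x, Ψ x⟫ - F x` (with `Ψ = ∇F`, `W` symmetric) is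
radially unbounded: `E(x) → +∞` as `‖x‖ → ∞`. -/
theorem stmt_4 {N : ℕ}
    (F : Euc N → ℝ) (Ψ : Euc N → Euc N)
    (W : Euc N →L[ℝ] Euc N)
    (hconv : ConvexOn ℝ Set.univ F)
    (hΨgrad : ∀ x, HasGradientAt F (Ψ x) x)
    (hΨcont : Continuous Ψ)
    (hWsymm : ∀ u v : Euc N, (inner ℝ (W u) v : ℝ) = inner ℝ u (W v))
    (a b C q : ℝ) (ha : 0 < a) (hb : 0 < b) (hC : 0 < C)
    (hq1 : 1 < q) (hq2 : q < 2)
    (R₀ : ℝ)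
    (hgrowth : ∀ x : Euc N, R₀ ≤ ‖x‖ →
      a * ‖x‖ ^ q ≤ F x ∧ F x ≤ b * ‖x‖ ^ q)
    (hgrad : ∀ x : Euc N, R₀ ≤ ‖x‖ → ‖Ψ x‖ ≤ C * ‖x‖ ^ (q - 1))
    (Energy : Euc N → ℝ)
    (hE : ∀ x, Energy x =
      -(1/2) * (inner ℝ (Ψ x) (W (Ψ x)) : ℝ) + (inner ℝ x (Ψ x) : ℝ) - F x) :
    Filter.Tendsto Energy (Filter.comap norm Filter.atTop) Filter.atTop := by
  -- choose t
  obtain ⟨t, ht0, ht1, hbt⟩ : ∃ t : ℝ, 0 < t ∧ t < 1 ∧ b * t ^ (q-1) ≤ a / 2 := by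
    refine ⟨min (1/2) ((a / (2*b)) ^ ((1:ℝ)/(q-1))), ?_, ?_, ?_⟩
    · have hab : 0 < a / (2*b) := by positivity
      exact lt_min (by norm_num) (Real.rpow_pos_of_pos hab _)
    · exact lt_of_le_of_lt (min_le_left _ _) (by norm_num)
    · have hab : 0 < a / (2*b) := by positivity
      have ht0' : 0 < min (1/2) ((a / (2*b)) ^ ((1:ℝ)/(q-1))) :=
        lt_min (by norm_num) (Real.rpow_pos_of_pos hab _)
      have htq : (min (1/2) ((a / (2*b)) ^ ((1:ℝ)/(q-1)))) ^ (q-1) ≤ a / (2*b) := by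
        have h1 := Real.rpow_le_rpow ht0'.le
          (min_le_right (1/2) ((a / (2*b)) ^ ((1:ℝ)/(q-1)))) (by linarith : (0:ℝ) ≤ q-1)
        calc (min (1/2) ((a / (2*b)) ^ ((1:ℝ)/(q-1)))) ^ (q-1)
            ≤ ((a / (2*b)) ^ ((1:ℝ)/(q-1))) ^ (q-1) := h1
          _ = a / (2*b) := by
              rw [← Real.rpow_mul hab.le, one_div,
                inv_mul_cancel₀ (by linarith : q - 1 ≠ 0), Real.rpow_one]
      calc b * (min (1/2) ((a / (2*b)) ^ ((1:ℝ)/(q-1)))) ^ (q-1)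
          ≤ b * (a / (2*b)) := mul_le_mul_of_nonneg_left htq hb.le
        _ = a / 2 := by field_simp
  obtain ⟨c₁, hc1, hc₁⟩ : ∃ c₁ : ℝ, c₁ = t * a / 2 ∧ 0 < c₁ :=
    ⟨t * a / 2, rfl, by positivity⟩
  obtain ⟨c₂, hc2, hc₂⟩ : ∃ c₂ : ℝ, c₂ = ‖W‖ * C^2 / 2 ∧ 0 ≤ c₂ :=
    ⟨‖W‖ * C^2 / 2, rfl, by positivity⟩
  set φ : ℝ → ℝ := fun r => c₁ * r ^ q - c₂ * r ^ (2*q - 2) with hφ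
  -- Step B : φ → ∞
  have hφtendsto : Filter.Tendsto φ Filter.atTop Filter.atTop := by
    have hsmall : Filter.Tendsto (fun r : ℝ => c₂ * r ^ (q - 2))
        Filter.atTop (nhds (c₂ * 0)) := by
      refine Filter.Tendsto.const_mul c₂ ?_
      have := tendsto_rpow_neg_atTop (by linarith : (0:ℝ) < 2 - q)
      simpa [neg_sub] using this
    rw [mul_zero] at hsmall
    have hev : ∀ᶠ r : ℝ in Filter.atTop, c₂ * r ^ (q - 2) < c₁ / 2 :=
      hsmall.eventually_lt_const (by positivity)
    have hbig : Filter.Tendsto (fun r : ℝ => (c₁/2) * r ^ q)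
        Filter.atTop Filter.atTop :=
      (tendsto_rpow_atTop (by linarith : (0:ℝ) < q)).const_mul_atTop
        (by positivity)
    refine Filter.tendsto_atTop_mono' _ ?_ hbig
    filter_upwards [hev, Filter.eventually_ge_atTop (1:ℝ)] with r hr hr1
    have hr0 : (0:ℝ) < r := by linarith
    have hsplit : r ^ (2*q - 2) = r ^ (q - 2) * r ^ q := by
      rw [← Real.rpow_add hr0]; ring_nf
    have hq0 : (0:ℝ) ≤ r ^ q := (Real.rpow_pos_of_pos hr0 q).le
    have : c₂ * r ^ (2*q - 2) ≤ (c₁/2) * r ^ q := by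
      rw [hsplit, ← mul_assoc]
      exact mul_le_mul_of_nonneg_right hr.le hq0
    simp only [hφ]
    linarith
  -- Step A : pointwise bound for large ‖x‖
  set R₁ : ℝ := max (max (R₀ + 1) (R₀ / t + 1)) 1 with hR1
  have hbound : ∀ x : Euc N, R₁ ≤ ‖x‖ → φ ‖x‖ ≤ Energy x := by
    intro x hx
    set r : ℝ := ‖x‖ with hr
    have hr1 : (1:ℝ) ≤ r := le_trans (le_max_right _ _) hx
    have hr0 : (0:ℝ) < r := by linarith
    have hrR : R₀ ≤ r :=
      le_trans (by linarith [le_max_left (R₀+1) (R₀/t+1), le_max_left (max (R₀+1) (R₀/t+1)) (1:ℝ)]) hx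
    have hrRt : R₀ / t + 1 ≤ r :=
      le_trans (le_trans (le_max_right _ _) (le_max_left _ _)) hx
    have hrt : R₀ ≤ t * r := by
      have h1 : R₀ / t ≤ r := by linarith
      have := mul_le_mul_of_nonneg_left h1 ht0.le
      rwa [mul_div_cancel₀ _ (ne_of_gt ht0)] at this
    have hΨb : ‖Ψ x‖ ≤ C * r ^ (q-1) := hgrad x hrR
    -- quadratic term bound
    have hΨ2 : ‖Ψ x‖^2 ≤ C^2 * r ^ (2*q - 2) := by
      have h1 : ‖Ψ x‖^2 ≤ (C * r ^ (q-1))^2 :=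
        pow_le_pow_left₀ (norm_nonneg _) hΨb 2
      have h2 : (r ^ (q-1))^(2:ℕ) = r ^ (2*q-2) := by
        rw [← Real.rpow_natCast (r ^ (q-1)) 2, ← Real.rpow_mul hr0.le]
        norm_num; ring_nf
      calc ‖Ψ x‖^2 ≤ (C * r ^ (q-1))^2 := h1
        _ = C^2 * (r ^ (q-1))^2 := by ring
        _ = C^2 * r ^ (2*q-2) := by rw [h2]
    have hQ : (inner ℝ (Ψ x) (W (Ψ x)) : ℝ) ≤ ‖W‖ * ‖Ψ x‖^2 := by
      calc (inner ℝ (Ψ x) (W (Ψ x)) : ℝ) ≤ ‖Ψ x‖ * ‖W (Ψ x)‖ :=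
            real_inner_le_norm _ _
        _ ≤ ‖Ψ x‖ * (‖W‖ * ‖Ψ x‖) := by
            exact mul_le_mul_of_nonneg_left (W.le_opNorm _) (norm_nonneg _)
        _ = ‖W‖ * ‖Ψ x‖^2 := by ring
    have hQ2 : -(1/2) * (inner ℝ (Ψ x) (W (Ψ x)) : ℝ) ≥ -(c₂ * r ^ (2*q-2)) := by
      have h2 : ‖W‖ * ‖Ψ x‖^2 ≤ ‖W‖ * (C^2 * r ^ (2*q-2)) :=
        mul_le_mul_of_nonneg_left hΨ2 (norm_nonneg _)
      have h3 := hQ.trans h2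
      rw [hc2]
      linarith [h3]
    -- Hamiltonian bound
    have hconvx := grad_convex_ineq hconv hΨgrad x (t • x)
    have hinner : (inner ℝ (Ψ x) (t • x - x) : ℝ) = (t - 1) * (inner ℝ (Ψ x) x : ℝ) := by
      have : t • x - x = (t - 1) • x := by rw [sub_smul, one_smul]
      rw [this, real_inner_smul_right]
    rw [hinner] at hconvx
    -- growth bounds
    have hFx : a * r ^ q ≤ F x := (hgrowth x hrR).1
    have hFtx : F (t • x) ≤ b * t ^ q * r ^ q := by
      have hn : ‖t • x‖ = t * r := by
        rw [norm_smul, Real.norm_eq_abs, abs_of_pos ht0]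
      have := (hgrowth (t • x) (by rw [hn]; exact hrt)).2
      rw [hn, Real.mul_rpow ht0.le hr0.le] at this
      linarith [this]
    have htq' : t ^ q = t * t ^ (q-1) := by
      have h := Real.rpow_add ht0 1 (q-1)
      rw [Real.rpow_one] at h
      have hq' : (1:ℝ) + (q-1) = q := by ring
      rw [hq'] at h
      exact h
    have hnum : c₁ * r ^ q ≤ t * F x - F (t • x) := by
      have h1 : b * t ^ q ≤ t * (a/2) := by
        rw [htq']
        calc b * (t * t ^ (q-1)) = t * (b * t ^ (q-1)) := by ring
          _ ≤ t * (a/2) := mul_le_mul_of_nonneg_left hbt ht0.le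
      have hrq0 : (0:ℝ) ≤ r ^ q := (Real.rpow_pos_of_pos hr0 q).le
      have h2 : t * (a * r ^ q) ≤ t * F x :=
        mul_le_mul_of_nonneg_left hFx ht0.le
      have h3 : F (t • x) ≤ t * (a/2) * r ^ q := by
        calc F (t • x) ≤ b * t ^ q * r ^ q := hFtx
          _ ≤ t * (a/2) * r ^ q := mul_le_mul_of_nonneg_right h1 hrq0
      rw [hc1]
      have e : t * a / 2 * r ^ q = t * (a * r ^ q) - t * (a/2) * r ^ q := by ring
      rw [e]
      linarith [h2, h3]
    have hnum0 : (0:ℝ) ≤ t * F x - F (t • x) := by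
      have : (0:ℝ) ≤ c₁ * r ^ q := by positivity
      linarith
    have hH : c₁ * r ^ q ≤ (inner ℝ x (Ψ x) : ℝ) - F x := by
      have h1t : 0 < 1 - t := by linarith
      have hips : (inner ℝ x (Ψ x) : ℝ) = (inner ℝ (Ψ x) x : ℝ) := real_inner_comm _ _
      set I : ℝ := (inner ℝ (Ψ x) x : ℝ) with hIdef
      have hcr : (0:ℝ) ≤ c₁ * r ^ q := by positivity
      have h4 : c₁ * r ^ q ≤ (1 - t) * (I - F x) := by
        have e : (1 - t) * (I - F x) =
            (t * F x - F (t • x)) + (F (t • x) - (F x + (t - 1) * I)) := by ring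
        rw [e]
        linarith [hnum, hconvx]
      have h5 : (0:ℝ) ≤ I - F x :=
        (mul_nonneg_iff_of_pos_left h1t).mp (le_trans hcr h4)
      have h6 : (1 - t) * (I - F x) ≤ I - F x := by
        have e2 : (1 - t) * (I - F x) = (I - F x) - t * (I - F x) := by ring
        rw [e2]
        linarith [mul_nonneg ht0.le h5]
      rw [hips]
      linarith
    rw [hE x]
    simp only [hφ]
    linarith [hQ2, hH]
  -- combine
  have hnorm : Filter.Tendsto (fun x : Euc N => ‖x‖)
      (Filter.comap norm Filter.atTop) Filter.atTop := Filter.tendsto_comap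
  have hcomp : Filter.Tendsto (fun x : Euc N => φ ‖x‖)
      (Filter.comap norm Filter.atTop) Filter.atTop := hφtendsto.comp hnorm
  refine Filter.tendsto_atTop_mono' _ ?_ hcomp
  have hmem : {x : Euc N | R₁ ≤ ‖x‖} ∈ Filter.comap norm Filter.atTop :=
    Filter.preimage_mem_comap (Filter.Ici_mem_atTop R₁)
  filter_upwards [hmem] with x hx
  exact hbound x hx
end

section
/- Let q ≥ 2 and N ≥ 1. There exist a convex C¹ function F : ℝ^N → ℝ with F(x) ~ Θ(‖x‖^q) and a symmetric matrix W with λ_max(W) > 0 and no zero entries such that the energy E(x) = -(1/2)∇F(x)ᵀW∇F(x) + xᵀ∇F(x) - F(x) is not radially unbounded, i.e., liminf_{‖x‖→∞} E(x) < +∞ (in fact E is unbounded below along some direction). -/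
open Real Filter Set Matrix

/-- for any `q ≥ 2` and `N ≥ 1` there exist a convex `C¹` function
`F` with `Θ(‖x‖^q)` growth (gradient `Ψ`) and a symmetric matrix `W` with
`λ_max(W) > 0` and no zero entries, such that the EBM energy is not radially
unbounded: it is unbounded below along some direction. -/
theorem stmt_5 (N : ℕ) (hN : 1 ≤ N) (q : ℝ) (hq : 2 ≤ q) :
    ∃ (F : Euc N → ℝ) (Ψ : Euc N → Euc N)
      (W : Matrix (Fin N) (Fin N) ℝ) (hW : W.IsHermitian),
      ConvexOn ℝ Set.univ F ∧
      (∀ x, HasGradientAt F (Ψ x) x) ∧ Continuous Ψ ∧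
      (∃ a b : ℝ, 0 < a ∧ 0 < b ∧ ∃ R₀ : ℝ, ∀ x : Euc N,
        R₀ ≤ ‖x‖ → a * ‖x‖ ^ q ≤ F x ∧ F x ≤ b * ‖x‖ ^ q) ∧
      (∃ i, 0 < hW.eigenvalues i) ∧
      (∀ i j, W i j ≠ 0) ∧
      (∃ v : Euc N, v ≠ 0 ∧
        Filter.Tendsto (fun t : ℝ =>
            -(1/2) * (inner ℝ (Ψ (t • v)) ((Matrix.toEuclideanLin W) (Ψ (t • v))) : ℝ)
              + (inner ℝ (t • v) (Ψ (t • v)) : ℝ) - F (t • v))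
          Filter.atTop Filter.atBot) := by
  have hq0 : (0:ℝ) < q := by linarith
  set F : Euc N → ℝ := fun x => (1/q) * ((inner ℝ x x : ℝ)) ^ (q/2) with hF
  set Ψ : Euc N → Euc N := fun x => (‖x‖ ^ (q-2)) • x with hΨ
  set W : Matrix (Fin N) (Fin N) ℝ := Matrix.of (fun _ _ => (4:ℝ)) with hWdef
  have hW : W.IsHermitian := by
    unfold Matrix.IsHermitian
    ext i j
    simp [hWdef, Matrix.conjTranspose_apply]
  -- basic algebraic identity
  have key : ∀ x : Euc N, ((inner ℝ x x : ℝ)) ^ (q/2) = ‖x‖ ^ q := by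
    intro x
    rw [real_inner_self_eq_norm_sq x, ← Real.rpow_natCast ‖x‖ 2,
      ← Real.rpow_mul (norm_nonneg x)]
    congr 1
    push_cast
    ring
  have hFx : ∀ x : Euc N, F x = (1/q) * ‖x‖ ^ q := by
    intro x
    simp only [hF]
    rw [key x]
  have i0 : Fin N := ⟨0, hN⟩
  refine ⟨F, Ψ, W, hW, ?_, ?_, ?_, ?_, ?_, ?_, ?_⟩
  · -- convexity
    have himg : (fun x : Euc N => ‖x‖) '' univ = Ici (0:ℝ) := by
      apply Subset.antisymm
      · rintro t ⟨x, -, rfl⟩; exact norm_nonneg x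
      · rintro t (ht : (0:ℝ) ≤ t)
        refine ⟨t • EuclideanSpace.single i0 (1:ℝ), mem_univ _, ?_⟩
        show ‖t • EuclideanSpace.single i0 (1:ℝ)‖ = t
        rw [norm_smul, EuclideanSpace.norm_single, norm_one, mul_one, Real.norm_eq_abs,
          abs_of_nonneg ht]
    have hg : ConvexOn ℝ ((fun x : Euc N => ‖x‖) '' univ) (fun t : ℝ => t ^ q) := by
      rw [himg]; exact convexOn_rpow (by linarith)
    have hmono : MonotoneOn (fun t : ℝ => t ^ q) ((fun x : Euc N => ‖x‖) '' univ) := by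
      rw [himg]
      intro a ha b _ hab
      exact Real.rpow_le_rpow ha hab (le_of_lt hq0)
    have hcomp : ConvexOn ℝ univ ((fun t : ℝ => t ^ q) ∘ fun x : Euc N => ‖x‖) :=
      ConvexOn.comp hg (convexOn_univ_norm) hmono
    have hsm := hcomp.smul (c := 1/q) (by positivity)
    have : F = (1/q) • ((fun t : ℝ => t ^ q) ∘ fun x : Euc N => ‖x‖) := by
      funext x
      simp only [hF, Pi.smul_apply, Function.comp_apply, smul_eq_mul, key x]
    rw [this]
    exact hsm
  · -- gradient
    intro x
    rw [hasGradientAt_iff_hasFDerivAt]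
    have hg : HasFDerivAt (fun y : Euc N => (inner ℝ y y : ℝ))
        ((fderivInnerCLM ℝ (x, x)).comp ((ContinuousLinearMap.id ℝ (Euc N)).prod
          (ContinuousLinearMap.id ℝ (Euc N)))) x :=
      (hasFDerivAt_id x).inner ℝ (hasFDerivAt_id x)
    have hh : HasDerivAt (fun t : ℝ => (1/q) * t ^ (q/2))
        ((1/q) * (q/2 * (inner ℝ x x : ℝ) ^ (q/2 - 1))) ((inner ℝ x x : ℝ)) :=
      (Real.hasDerivAt_rpow_const (Or.inr (by linarith))).const_mul (1/q)
    have H := HasDerivAt.comp_hasFDerivAt (f := fun y : Euc N => (inner ℝ y y : ℝ)) x hh hg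
    refine H.congr_fderiv ?_
    ext y
    simp only [ContinuousLinearMap.smul_apply, ContinuousLinearMap.coe_comp', Function.comp_apply,
      ContinuousLinearMap.prod_apply, ContinuousLinearMap.coe_id', id_eq, fderivInnerCLM_apply,
      InnerProductSpace.toDual_apply_apply, smul_eq_mul]
    rw [real_inner_smul_left, real_inner_comm y x]
    have h2 : (inner ℝ x x : ℝ) ^ (q/2 - 1) = ‖x‖ ^ (q - 2) := by
      rw [real_inner_self_eq_norm_sq x, ← Real.rpow_natCast ‖x‖ 2,
        ← Real.rpow_mul (norm_nonneg x)]
      norm_num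
      ring_nf
    rw [h2]
    field_simp
    ring
  · -- continuity of Ψ
    exact (continuous_norm.rpow_const (fun x => Or.inr (by linarith))).smul continuous_id
  · -- growth
    refine ⟨1/q, 1/q, by positivity, by positivity, 0, fun x _ => ?_⟩
    rw [hFx x]
    exact ⟨le_refl _, le_refl _⟩
  · -- positive eigenvalue
    have hnonneg : ∀ i, 0 ≤ hW.eigenvalues i := by
      intro i
      rw [Matrix.IsHermitian.eigenvalues_eq]
      have hdp : ∀ u : Fin N → ℝ, dotProduct (star u) (W *ᵥ u) = 4 * (∑ j, u j) ^ 2 := by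
        intro u
        simp only [dotProduct, Matrix.mulVec, star_trivial, hWdef, Matrix.of_apply]
        have h1 : ∀ i : Fin N, (∑ j, 4 * u j) = 4 * ∑ j, u j := by
          intro i; rw [Finset.mul_sum]
        calc ∑ i, u i * ∑ j, (4:ℝ) * u j = ∑ i, u i * (4 * ∑ j, u j) := by
              simp_rw [Finset.mul_sum]
          _ = (∑ i, u i) * (4 * ∑ j, u j) := by rw [← Finset.sum_mul]
          _ = 4 * (∑ j, u j) ^ 2 := by ring
      rw [hdp]
      rw [RCLike.re_to_real]
      positivity
    by_contra hcon
    push_neg at hcon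
    have hzero : hW.eigenvalues = 0 := by
      funext i
      exact le_antisymm (hcon i) (hnonneg i)
    have hWne : W ≠ 0 := by
      intro h
      have h00 : W i0 i0 = 0 := by rw [h]; rfl
      simp [hWdef] at h00
    apply hWne
    have hst := hW.spectral_theorem
    rwa [hzero, Pi.comp_zero, RCLike.ofReal_zero,
      (by rfl : Function.const (Fin N) (0:ℝ) = fun _ ↦ 0),
      Matrix.diagonal_zero, map_zero] at hst
  · -- nonzero entries
    intro i j
    simp [hWdef]
  · -- blow-up along v
    set v : Euc N := EuclideanSpace.single i0 (1:ℝ) with hv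
    have hvnorm : ‖v‖ = 1 := by rw [hv, EuclideanSpace.norm_single, norm_one]
    have hvv : (inner ℝ v v : ℝ) = 1 := by
      rw [real_inner_self_eq_norm_sq, hvnorm]; norm_num
    have hWvv : (inner ℝ v ((Matrix.toEuclideanLin W) v) : ℝ) = 4 := by
      rw [PiLp.inner_apply]
      have happ : ∀ i, ((Matrix.toEuclideanLin W) v) i = 4 := by
        intro i
        rw [Matrix.toEuclideanLin_apply]
        show (W *ᵥ (fun j => v j)) i = 4
        simp [Matrix.mulVec, dotProduct, hWdef, hv, EuclideanSpace.single_apply]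
      simp only [happ, RCLike.inner_apply, conj_trivial]
      simp [hv, EuclideanSpace.single_apply]
    refine ⟨v, by simp [hv, ← norm_ne_zero_iff, hvnorm], ?_⟩
    apply tendsto_atBot_mono' _ _ tendsto_neg_atTop_atBot
    filter_upwards [eventually_ge_atTop (1:ℝ)] with t ht
    have ht0 : (0:ℝ) < t := by linarith
    have hnt : ‖t • v‖ = t := by
      rw [norm_smul, hvnorm, mul_one, Real.norm_eq_abs, abs_of_pos ht0]
    have hΨt : Ψ (t • v) = (t ^ (q-2) * t) • v := by
      rw [hΨ]
      simp only [hnt, smul_smul]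
    set s : ℝ := t ^ (q-2) * t with hs
    have h2t : t ^ (2:ℝ) = t * t := by
      rw [show (2:ℝ) = ((2:ℕ):ℝ) by norm_num, Real.rpow_natCast]
      ring
    have hts : t * s = t ^ q := by
      calc t * s = t ^ (q-2) * t ^ (2:ℝ) := by rw [hs, h2t]; ring
        _ = t ^ (q - 2 + 2) := by rw [← Real.rpow_add ht0]
        _ = t ^ q := by congr 1; ring
    have hss : s * s = t ^ (2*q - 2) := by
      calc s * s = (t ^ (q-2) * t ^ (q-2)) * t ^ (2:ℝ) := by rw [hs, h2t]; ring
        _ = t ^ (q - 2 + (q - 2)) * t ^ (2:ℝ) := by rw [Real.rpow_add ht0]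
        _ = t ^ (q - 2 + (q - 2) + 2) := by rw [← Real.rpow_add ht0]
        _ = t ^ (2*q - 2) := by congr 1; ring
    have h3 : t ^ q ≤ t ^ (2*q - 2) :=
      Real.rpow_le_rpow_of_exponent_le ht (by linarith)
    have h4 : t ≤ t ^ q := by
      nth_rewrite 1 [← Real.rpow_one t]
      exact Real.rpow_le_rpow_of_exponent_le ht (by linarith)
    have h5 : 0 ≤ (1/q) * t ^ q := by positivity
    rw [hΨt]
    rw [_root_.map_smul, real_inner_smul_left, real_inner_smul_right, hWvv,
      real_inner_smul_left, real_inner_smul_right, hvv]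
    have hFt : F (t • v) = (1/q) * t ^ q := by
      rw [hFx (t • v), hnt]
    rw [hFt]
    nlinarith [hss, h3, h4, h5, hts]
end

section
/- Let f : ℝ^N → ℝ^N be locally Lipschitz, r > 0, and suppose xᵀf(x) < 0 for all x with ‖x‖ ≥ r, with the strengthened property that for each R > r there exists γ_R > 0 with xᵀf(x) ≤ -γ_R for all ‖x‖ = R. Then for every initial condition x₀ ∈ ℝ^N, the solution x(t) of ẋ = f(x) satisfies limsup_{t→∞} ‖x(t)‖ ≤ r. -/
/-- absorption into the ball `B̄_r(0)`: if `⟪x, f x⟫ < 0` for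
`‖x‖ ≥ r` and the radial derivative is uniformly negative (`≤ -γ_R`) on each
sphere of radius `R > r`, then every solution of `ẋ = f(x)` satisfies
`limsup_{t→∞} ‖x(t)‖ ≤ r`. -/
theorem stmt_15 {N : ℕ}
    (f : Euc N → Euc N) (hLip : LocallyLipschitz f)
    (r : ℝ) (hr : 0 < r)
    (hneg : ∀ x : Euc N, r ≤ ‖x‖ → (inner ℝ x (f x) : ℝ) < 0)
    (hunif : ∀ R : ℝ, r < R → ∃ γ : ℝ, 0 < γ ∧
      ∀ x : Euc N, ‖x‖ = R → (inner ℝ x (f x) : ℝ) ≤ -γ)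
    (x : ℝ → Euc N)
    (hsol : ∀ t, 0 ≤ t → HasDerivAt x (f (x t)) t) :
    Filter.limsup (fun t => ‖x t‖) Filter.atTop ≤ r := by
  set V : ℝ → ℝ := fun t => ‖x t‖ ^ 2 with hV
  -- derivative of V
  have hVd : ∀ t, 0 ≤ t → HasDerivAt V (2 * (inner ℝ (x t) (f (x t)) : ℝ)) t := by
    intro t ht
    have h1 : HasDerivAt (fun s => (inner ℝ (x s) (x s) : ℝ))
        ((inner ℝ (x t) (f (x t)) : ℝ) + (inner ℝ (f (x t)) (x t) : ℝ)) t :=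
      (hsol t ht).inner ℝ (hsol t ht)
    have h2 : (fun s => (inner ℝ (x s) (x s) : ℝ)) = V := by
      funext s; rw [hV, real_inner_self_eq_norm_sq]
    rw [h2] at h1
    convert h1 using 1
    rw [real_inner_comm (f (x t)) (x t)]; ring
  -- key: eventually V t ≤ (r+ε)^2
  have key : ∀ ε : ℝ, 0 < ε → ∀ᶠ t in Filter.atTop, ‖x t‖ ≤ r + ε := by
    intro ε hε
    set b : ℝ := (r + ε) ^ 2 with hb
    -- strict antitonicity on intervals where V > b except possibly at left endpoint
    have hanti : ∀ s t : ℝ, 0 ≤ s → s ≤ t → (∀ u, s < u → u ≤ t → b < V u) →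
        StrictAntiOn V (Set.Icc s t) := by
      intro s t hs hst hgt
      apply strictAntiOn_of_deriv_neg (convex_Icc s t)
      · intro u hu
        exact ((hVd u (hs.trans hu.1)).continuousAt).continuousWithinAt
      · intro u hu
        rw [interior_Icc] at hu
        have hub : b < V u := hgt u hu.1 hu.2.le
        have hru : r ≤ ‖x u‖ := by
          have : r + ε < ‖x u‖ := by
            have := lt_of_pow_lt_pow_left₀ 2 (norm_nonneg (x u)) hub
            linarith
          linarith
        rw [(hVd u (hs.trans hu.1.le)).deriv]
        have := hneg (x u) hru
        linarith
    -- Claim B: there exists t₀ ≥ 0 with V t₀ ≤ b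
    have hB : ∃ t₀ : ℝ, 0 ≤ t₀ ∧ V t₀ ≤ b := by
      by_contra h
      push_neg at h
      have hgt : ∀ t : ℝ, 0 ≤ t → b < V t := fun t ht => h t ht
      -- V is antitone on Ici 0, so ‖x t‖ ≤ ‖x 0‖
      have hmono : ∀ t : ℝ, 0 ≤ t → V t ≤ V 0 := by
        intro t ht
        rcases eq_or_lt_of_le ht with h0 | h0
        · rw [← h0]
        · exact (hanti 0 t le_rfl ht (fun u hu _ => hgt u hu.le)
            ⟨le_rfl, ht⟩ ⟨ht, le_rfl⟩ h0).le
      have hnormle : ∀ t : ℝ, 0 ≤ t → ‖x t‖ ≤ ‖x 0‖ := by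
        intro t ht
        exact le_of_pow_le_pow_left₀ two_ne_zero (norm_nonneg _) (hmono t ht)
      -- compact annulus
      set K : Set (Euc N) := {y | r + ε ≤ ‖y‖ ∧ ‖y‖ ≤ ‖x 0‖} with hK
      have hKc : IsCompact K := by
        have hcl : IsClosed K :=
          (isClosed_le continuous_const continuous_norm).inter
            (isClosed_le continuous_norm continuous_const)
        have hbd : Bornology.IsBounded K :=
          (Metric.isBounded_closedBall (x := (0 : Euc N)) (r := ‖x 0‖)).subset
            (fun y hy => by simpa [Metric.mem_closedBall] using hy.2)
        exact Metric.isCompact_of_isClosed_isBounded hcl hbd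
      have hg : Continuous fun y : Euc N => (inner ℝ y (f y) : ℝ) :=
        continuous_inner.comp (continuous_id.prodMk hLip.continuous)
      have hx0K : x 0 ∈ K := by
        refine ⟨?_, le_rfl⟩
        have := lt_of_pow_lt_pow_left₀ 2 (norm_nonneg (x 0)) (hgt 0 le_rfl)
        linarith
      obtain ⟨y₀, hy₀K, hy₀max⟩ := hKc.exists_isMaxOn ⟨x 0, hx0K⟩ hg.continuousOn
      have hy₀neg : (inner ℝ y₀ (f y₀) : ℝ) < 0 := hneg y₀ (by have := hy₀K.1; linarith)
      set C : ℝ := 2 * (inner ℝ y₀ (f y₀) : ℝ) with hC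
      have hCneg : C < 0 := by linarith
      -- V t - V 0 ≤ C * t
      have hmem : ∀ t : ℝ, 0 ≤ t → x t ∈ K := by
        intro t ht
        refine ⟨?_, hnormle t ht⟩
        have := lt_of_pow_lt_pow_left₀ 2 (norm_nonneg (x t)) (hgt t ht)
        linarith
      have hbound : ∀ t : ℝ, 0 ≤ t → V t - V 0 ≤ C * (t - 0) := by
        intro t ht
        refine (convex_Ici 0).image_sub_le_mul_sub_of_deriv_le
          (fun u hu => ((hVd u hu).continuousAt).continuousWithinAt)
          (fun u hu => by
            rw [interior_Ici] at hu
            exact ((hVd u hu.le).differentiableAt).differentiableWithinAt)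
          (fun u hu => by
            rw [interior_Ici] at hu
            rw [(hVd u hu.le).deriv]
            have hm := hy₀max (hmem u hu.le)
            rw [Set.mem_setOf_eq] at hm
            rw [hC]; linarith)
          0 Set.self_mem_Ici t (Set.mem_Ici.mpr ht) ht
      -- derive contradiction for large t
      set T : ℝ := max 0 ((b - V 0) / C) + 1 with hT
      have hT0 : 0 ≤ T := by positivity
      have h1 : (b - V 0) / C < T := by
        have := le_max_right 0 ((b - V 0) / C); linarith [le_max_right 0 ((b - V 0) / C)]
      have h2 : C * T < b - V 0 := by
        rw [div_lt_iff_of_neg hCneg] at h1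
        linarith
      have := hbound T hT0
      have := hgt T hT0
      linarith
    -- Claim A: once V t₀ ≤ b, it stays ≤ b
    obtain ⟨t₀, ht₀, hVt₀⟩ := hB
    have hA : ∀ t, t₀ ≤ t → V t ≤ b := by
      intro t₁ ht₁
      by_contra hcon
      push_neg at hcon
      set S : Set ℝ := {s ∈ Set.Icc t₀ t₁ | V s ≤ b} with hS
      have hSne : S.Nonempty := ⟨t₀, ⟨le_rfl, ht₁⟩, hVt₀⟩
      have hScl : IsClosed S := by
        have hVcont : ContinuousOn V (Set.Icc t₀ t₁) := fun u hu =>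
          ((hVd u (ht₀.trans hu.1)).continuousAt).continuousWithinAt
        have : S = Set.Icc t₀ t₁ ∩ V ⁻¹' (Set.Iic b) := by
          ext u; simp [hS, Set.mem_Iic, and_comm]
        rw [this]
        exact (hVcont.preimage_isClosed_of_isClosed isClosed_Icc isClosed_Iic)
      have hSbd : BddAbove S := ⟨t₁, fun u hu => hu.1.2⟩
      set s := sSup S with hs
      have hsS : s ∈ S := hScl.csSup_mem hSne hSbd
      have hst₁ : s ≤ t₁ := hsS.1.2
      have hslt : s < t₁ := lt_of_le_of_ne hst₁ (fun heq => absurd (heq ▸ hsS.2) (not_le.mpr hcon))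
      have hgt : ∀ u, s < u → u ≤ t₁ → b < V u := by
        intro u hsu hu1
        by_contra hc
        push_neg at hc
        have : u ∈ S := ⟨⟨hsS.1.1.trans hsu.le, hu1⟩, hc⟩
        exact absurd (le_csSup hSbd this) (not_le.mpr hsu)
      have := hanti s t₁ (ht₀.trans hsS.1.1) hst₁ hgt ⟨le_rfl, hst₁⟩ ⟨hst₁, le_rfl⟩ hslt
      have : V t₁ < V s := this
      have : b < b := lt_of_lt_of_le hcon (this.le.trans hsS.2)
      exact absurd this (lt_irrefl b)
    -- conclude eventual bound on norm
    filter_upwards [Filter.eventually_ge_atTop t₀] with t ht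
    have := hA t ht
    have hrε : 0 ≤ r + ε := by linarith
    exact le_of_pow_le_pow_left₀ two_ne_zero hrε this
  -- from the eventual bounds, conclude limsup ≤ r
  refine le_of_forall_pos_le_add ?_
  intro ε hε
  refine Filter.limsup_le_of_le ?_ (key ε hε)
  exact Filter.isCoboundedUnder_le_of_le Filter.atTop (fun t => norm_nonneg (x t))
end
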